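/- Let M = F_{p^m}, p odd, m even, with q = p^k, r = p^{k+m/2} chosen as in the Göloğlu–Kölsch construction, and let A ∈ M be a non-square. If a, c ∈ M satisfy a^{r^2} c = A^{r+1} a c^{r^2}, then a·c = 0. -/
import Mathlib

lemma odd_mul_self_aux (x : ℕ) (h : Odd x) : ∃ q, x * x = 4 * q + 1 := by
  obtain ⟨z, rfl⟩ := h; exact ⟨z * z + z, by ring⟩

lemma key_nt (p j m : ℕ) (hp : Odd p) (hm : Even m) (hj : 0 < j) :
    ∃ e s t v : ℕ, Odd s ∧ p ^ j + 1 = 2 ^ e * s ∧ p ^ m - 1 = 2 ^ (e + 1) * t ∧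
      p ^ j * p ^ j - 1 = 2 ^ (e + 1) * v := by
  have hp1 : 1 ≤ p := by have := Nat.odd_iff.mp hp; omega
  rcases Nat.even_or_odd j with hje | hjo
  · -- j even
    obtain ⟨j', rfl⟩ := hje
    obtain ⟨m', rfl⟩ := hm
    obtain ⟨x, hx⟩ := odd_mul_self_aux _ (hp.pow : Odd (p ^ j'))
    obtain ⟨y, hy⟩ := odd_mul_self_aux _ (hp.pow : Odd (p ^ m'))
    obtain ⟨z, hz⟩ := odd_mul_self_aux _ (hp.pow : Odd (p ^ (j' + j')))
    have e1 : p ^ (j' + j') = p ^ j' * p ^ j' := by rw [pow_add]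
    have e2 : p ^ (m' + m') = p ^ m' * p ^ m' := by rw [pow_add]
    refine ⟨1, 2 * x + 1, y, z, ⟨x, by ring⟩, ?_, ?_, ?_⟩
    · rw [e1, hx]; ring
    · rw [e2, hy]; norm_num
    · rw [hz]; norm_num
  · -- j odd
    obtain ⟨e, s, hs2, hes⟩ := Nat.exists_eq_pow_mul_and_not_dvd
      (show p + 1 ≠ 0 by omega) 2 (by norm_num)
    have hpmod : p % 2 = 1 := Nat.odd_iff.mp hp
    have hsodd : Odd s := Nat.odd_iff.mpr (by omega)
    have hgs := geom_sum_mul (-(p : ℤ)) j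
    set T : ℤ := ∑ i ∈ Finset.range j, (-(p : ℤ)) ^ i with hTdef
    have hnegp : (-(p : ℤ)) ^ j = -((p : ℤ) ^ j) := Odd.neg_pow hjo _
    have hTj : ((p : ℤ) + 1) * T = (p : ℤ) ^ j + 1 := by
      rw [hnegp] at hgs; linear_combination -hgs
    have hTodd : ¬ (2 : ℤ) ∣ T := by
      intro hdvd
      have hcast : ((T : ℤ) : ZMod 2) = 0 := by
        exact_mod_cast (ZMod.intCast_zmod_eq_zero_iff_dvd T 2).mpr (by exact_mod_cast hdvd)
      have hp2 : ((p : ℕ) : ZMod 2) = 1 := by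
        rw [← ZMod.natCast_mod p 2, hpmod]; norm_num
      have hneg1 : (-1 : ZMod 2) = 1 := by decide
      have hjcast : ((T : ℤ) : ZMod 2) = (j : ZMod 2) := by
        rw [hTdef]
        push_cast
        simp [hp2, hneg1]
      rw [hjcast] at hcast
      have := (ZMod.natCast_eq_zero_iff j 2).mp hcast
      exact (Nat.not_even_iff_odd.mpr hjo) (even_iff_two_dvd.mpr this)
    have hT0 : 0 ≤ T := by
      by_contra hle
      push_neg at hle
      have h2 : (0 : ℤ) < (p : ℤ) ^ j + 1 := by positivity
      nlinarith [hTj]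
    set S : ℕ := T.toNat with hSdef
    have hS : (S : ℤ) = T := Int.toNat_of_nonneg hT0
    have hnat : p ^ j + 1 = (p + 1) * S := by
      have : ((p ^ j + 1 : ℕ) : ℤ) = (((p + 1) * S : ℕ) : ℤ) := by
        push_cast
        rw [hS]; linarith [hTj]
      exact_mod_cast this
    have hSodd : Odd S := by
      rw [Nat.odd_iff]
      by_contra hS2
      have h2S : (2 : ℕ) ∣ S := by omega
      exact hTodd (hS ▸ (Int.natCast_dvd_natCast.mpr h2S : (2:ℤ) ∣ (S:ℤ)))
    have hd1 : p ^ j + 1 = 2 ^ e * (s * S) := by rw [hnat, hes]; ring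
    obtain ⟨c2, hc2⟩ : ∃ c2, p - 1 = 2 * c2 := ⟨(p - 1) / 2, by omega⟩
    have hsq : p * p - 1 = (p + 1) * (p - 1) := by
      obtain ⟨w, rfl⟩ : ∃ w, p = w + 1 := ⟨p - 1, by omega⟩
      rw [show w + 1 - 1 = w from rfl]
      exact Nat.sub_eq_of_eq_add (by ring)
    have hdvd2 : 2 ^ (e + 1) ∣ p ^ m - 1 := by
      obtain ⟨m', rfl⟩ := hm
      have hpp : (p * p) ^ m' = p ^ (m' + m') := by
        rw [← pow_two, ← pow_mul, two_mul]
      have hdm : p * p - 1 ∣ p ^ (m' + m') - 1 := by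
        have := Nat.sub_dvd_pow_sub_pow (p * p) 1 m'
        rwa [one_pow, hpp] at this
      refine dvd_trans ?_ hdm
      rw [hsq, hes, hc2]
      exact ⟨s * c2, by rw [pow_succ]; ring⟩
    obtain ⟨t, ht⟩ := hdvd2
    have hpjodd : Odd (p ^ j) := hp.pow
    have hpj1 : 1 ≤ p ^ j := Nat.one_le_pow _ _ (by omega)
    have hdvd3 : 2 ^ (e + 1) ∣ p ^ j * p ^ j - 1 := by
      have hsqj : p ^ j * p ^ j - 1 = (p ^ j + 1) * (p ^ j - 1) := by
        obtain ⟨w, hw⟩ : ∃ w, p ^ j = w + 1 := ⟨p ^ j - 1, by omega⟩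
        rw [hw, show w + 1 - 1 = w from rfl]
        exact Nat.sub_eq_of_eq_add (by ring)
      obtain ⟨c3, hc3⟩ : ∃ c3, p ^ j - 1 = 2 * c3 :=
        ⟨(p ^ j - 1) / 2, by have := Nat.odd_iff.mp hpjodd; omega⟩
      rw [hsqj, hd1, hc3]
      exact ⟨s * S * c3, by rw [pow_succ]; ring⟩
    obtain ⟨v, hv⟩ := hdvd3
    exact ⟨e, s * S, t, v, hsodd.mul hSodd, hd1, ht, hv⟩

theorem stmt_10 (p m k : ℕ) (hp : p.Prime) (hodd : Odd p) (hm : Even m) (hm0 : 0 < m)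
    (hk1 : 1 ≤ k) (hk2 : k ≤ m - 1) (hko : Odd (m / Nat.gcd k m))
    (F : Type) [Field F] [Fintype F] (hF : Fintype.card F = p ^ m)
    (A : F) (hA : ¬ IsSquare A) (a c : F)
    (h : a ^ (p ^ (k + m / 2) * p ^ (k + m / 2)) * c
        = A ^ (p ^ (k + m / 2) + 1) * a * c ^ (p ^ (k + m / 2) * p ^ (k + m / 2))) :
    a * c = 0 := by
  by_contra hac
  have ha : a ≠ 0 := fun h0 => hac (by simp [h0])
  have hc : c ≠ 0 := fun h0 => hac (by simp [h0])
  obtain ⟨e, s, t, v, hs_odd, h1, h2, h3⟩ := key_nt p (k + m / 2) m hodd hm (by omega)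
  set r := p ^ (k + m / 2) with hrdef
  -- basic facts
  have hcard_odd : Fintype.card F % 2 = 1 := by
    rw [hF]; exact Nat.odd_iff.mp hodd.pow
  have hchar : ringChar F ≠ 2 := by
    intro h2c
    have := FiniteField.even_card_of_char_two h2c
    omega
  have hA0 : A ≠ 0 := by
    rintro rfl; exact hA ⟨0, by simp⟩
  have h1r : 1 ≤ r := Nat.one_le_pow _ _ hp.pos
  have hr1 : 1 ≤ r * r := by nlinarith
  -- key equation
  have hkey : (a / c) ^ (r * r - 1) = A ^ (r + 1) := by
    have e1 : a ^ (r * r) = a ^ (r * r - 1) * a := by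
      rw [← pow_succ]; congr 1; omega
    have e2 : c ^ (r * r) = c ^ (r * r - 1) * c := by
      rw [← pow_succ]; congr 1; omega
    have hcalc : a ^ (r * r - 1) * (a * c) = (A ^ (r + 1) * c ^ (r * r - 1)) * (a * c) :=
      calc a ^ (r * r - 1) * (a * c) = a ^ (r * r) * c := by rw [e1]; ring
        _ = A ^ (r + 1) * a * c ^ (r * r) := h
        _ = (A ^ (r + 1) * c ^ (r * r - 1)) * (a * c) := by rw [e2]; ring
    have h2c := mul_right_cancel₀ (mul_ne_zero ha hc) hcalc
    rw [div_pow, h2c, mul_div_assoc, div_self (pow_ne_zero _ hc), mul_one]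
  -- A^(card/2) = -1
  have hAs : A ^ (Fintype.card F / 2) ≠ 1 := fun h1' =>
    hA ((FiniteField.isSquare_iff hchar hA0).mpr h1')
  have hAsq : (A ^ (Fintype.card F / 2)) * (A ^ (Fintype.card F / 2)) = 1 := by
    have hhalf : Fintype.card F / 2 + Fintype.card F / 2 = Fintype.card F - 1 := by omega
    rw [← pow_add, hhalf]
    exact FiniteField.pow_card_sub_one_eq_one A hA0
  have hAneg : A ^ (Fintype.card F / 2) = -1 := by
    rcases mul_self_eq_one_iff.mp hAsq with h1' | h1'
    · exact absurd h1' hAs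
    · exact h1'
  -- card arithmetic
  have hcard1 : Fintype.card F - 1 = 2 ^ (e + 1) * t := by rw [hF]; exact h2
  have hhalf : Fintype.card F / 2 = 2 ^ e * t := by
    have hps : (2 : ℕ) ^ (e + 1) = 2 * 2 ^ e := by rw [pow_succ]; ring
    have hcc : Fintype.card F - 1 = 2 * (2 ^ e * t) := by rw [hcard1, hps]; ring
    have hpos : 0 < Fintype.card F := Fintype.card_pos
    omega
  have hu : a / c ≠ 0 := div_ne_zero ha hc
  have hE1 : A ^ ((r + 1) * t) = -1 := by
    have hx : (r + 1) * t = (Fintype.card F / 2) * s := by rw [h1, hhalf]; ring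
    rw [hx, pow_mul, hAneg, hs_odd.neg_one_pow]
  have hE2 : A ^ ((r + 1) * t) = 1 := by
    rw [pow_mul, ← hkey, ← pow_mul]
    have hx : (r * r - 1) * t = (Fintype.card F - 1) * v := by rw [h3, hcard1]; ring
    rw [hx, pow_mul, FiniteField.pow_card_sub_one_eq_one _ hu, one_pow]
  rw [hE2] at hE1
  exact Ring.neg_one_ne_one_of_char_ne_two hchar hE1.symm
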